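/- arXiv:1502.05510 — 5 statements merged into one kernel-verified Lean document; each statement's English description precedes it below -/
import Mathlib

section
/- Fix a dimension d ≥ 1 and a compact convex set E ⊆ ℝ^d with nonempty interior. Let 𝐂* denote the collection of nonempty compact convex subsets of E, equipped with the Hausdorff metric d_H. Then the σ-algebra on 𝐂* generated by the family of 'brackets' [C] = {A ∈ 𝐂* : A ⊆ C}, C ranging over 𝐂*, equals the Borel σ-algebra of the metric space (𝐂*, d_H). -/
open Metric Set TopologicalSpace MeasurableSpace MeasureTheory
open scoped RealInnerProductSpace


/-- The collection of nonempty compact convex subsets of `E ⊆ ℝ^d`, as a subtype of the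
nonempty compact subsets of `ℝ^d`; it inherits the Hausdorff metric. -/
abbrev ConvexBodiesIn (d : ℕ) (E : Set (EuclideanSpace ℝ (Fin d))) : Type :=
  {K : TopologicalSpace.NonemptyCompacts (EuclideanSpace ℝ (Fin d)) //
    (K : Set (EuclideanSpace ℝ (Fin d))) ⊆ E ∧ Convex ℝ (K : Set (EuclideanSpace ℝ (Fin d)))}


namespace BracketsAux

variable {d : ℕ} {E : Set (EuclideanSpace ℝ (Fin d))}

def brk (d : ℕ) (E : Set (EuclideanSpace ℝ (Fin d))) : Set (Set (ConvexBodiesIn d E)) :=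
  {B | ∃ C : ConvexBodiesIn d E,
    B = {A | (A.1 : Set (EuclideanSpace ℝ (Fin d))) ⊆ (C.1 : Set (EuclideanSpace ℝ (Fin d)))}}

def M (d : ℕ) (E : Set (EuclideanSpace ℝ (Fin d))) : MeasurableSpace (ConvexBodiesIn d E) :=
  .generateFrom (brk d E)

lemma subset_measurable (hEc : IsCompact E) (hEconv : Convex ℝ E)
    {s : Set (EuclideanSpace ℝ (Fin d))} (hcl : IsClosed s) (hconv : Convex ℝ s)
    (hne : (s ∩ E).Nonempty) :
    MeasurableSet[M d E] {A : ConvexBodiesIn d E | (A.1 : Set (EuclideanSpace ℝ (Fin d))) ⊆ s} := by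
  have hcomp : IsCompact (s ∩ E) := hEc.inter_left hcl
  set C : ConvexBodiesIn d E :=
    ⟨⟨⟨s ∩ E, hcomp⟩, hne⟩, inter_subset_right, hconv.inter hEconv⟩ with hC
  have : {A : ConvexBodiesIn d E | (A.1 : Set (EuclideanSpace ℝ (Fin d))) ⊆ s}
      = {A : ConvexBodiesIn d E |
          (A.1 : Set (EuclideanSpace ℝ (Fin d))) ⊆ (C.1 : Set (EuclideanSpace ℝ (Fin d)))} := by
    ext A
    simp only [mem_setOf_eq, hC]
    constructor
    · exact fun h => subset_inter h A.2.1
    · exact fun h => h.trans inter_subset_left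
  rw [this]
  exact measurableSet_generateFrom ⟨C, rfl⟩

def ratVec (w : Fin d → ℚ) : EuclideanSpace ℝ (Fin d) := WithLp.toLp 2 (fun i => (w i : ℝ))

lemma exists_rat_vec (v : EuclideanSpace ℝ (Fin d)) {δ : ℝ} (hδ : 0 < δ) :
    ∃ w : Fin d → ℚ,
      ‖v - ratVec w‖ < δ := by
  set δ' : ℝ := δ / (d + 1) with hδ'
  have hδ'pos : 0 < δ' := by positivity
  have h : ∀ i : Fin d, ∃ q : ℚ, |v i - (q : ℝ)| < δ' := by
    intro i
    obtain ⟨q, hq1, hq2⟩ := exists_rat_btwn (show v i - δ' < v i + δ' by linarith)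
    exact ⟨q, abs_lt.2 ⟨by linarith, by linarith⟩⟩
  choose w hw using h
  refine ⟨w, ?_⟩
  have hnorm : ‖v - ratVec w‖
      = Real.sqrt (∑ i, ‖v i - (w i : ℝ)‖ ^ 2) := by
    rw [EuclideanSpace.norm_eq]
    congr 1
  rw [hnorm]
  have hsum : (∑ i, ‖v i - (w i : ℝ)‖ ^ 2) ≤ (d : ℝ) * δ' ^ 2 := by
    calc (∑ i, ‖v i - (w i : ℝ)‖ ^ 2) ≤ ∑ _i : Fin d, δ' ^ 2 := by
          refine Finset.sum_le_sum fun i _ => ?_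
          have := (hw i).le
          have h0 : ‖v i - (w i : ℝ)‖ = |v i - (w i : ℝ)| := rfl
          rw [h0]
          nlinarith [abs_nonneg (v i - (w i : ℝ))]
      _ = (d : ℝ) * δ' ^ 2 := by simp [Finset.sum_const, Finset.card_univ, nsmul_eq_mul]
  have hlt : (d : ℝ) * δ' ^ 2 < δ ^ 2 := by
    have hd1 : (0:ℝ) < (d:ℝ) + 1 := by positivity
    rw [hδ', div_pow]
    rw [mul_div_assoc']
    rw [div_lt_iff₀ (by positivity)]
    nlinarith [mul_pos (mul_pos hδ hδ) (show (0:ℝ) < (d:ℝ)^2 + (d:ℝ) + 1 by positivity)]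
  calc Real.sqrt (∑ i, ‖v i - (w i : ℝ)‖ ^ 2) < Real.sqrt (δ ^ 2) := by
        apply Real.sqrt_lt_sqrt (Finset.sum_nonneg fun i _ => by positivity)
        linarith
    _ = δ := by rw [Real.sqrt_sq hδ.le]

def halfSpace (v : EuclideanSpace ℝ (Fin d)) (c : ℝ) : Set (EuclideanSpace ℝ (Fin d)) :=
  {y | ⟪v, y⟫ ≤ c}

lemma halfSpace_closed (v : EuclideanSpace ℝ (Fin d)) (c : ℝ) : IsClosed (halfSpace v c) :=
  isClosed_le (continuous_const.inner continuous_id) continuous_const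

lemma halfSpace_convex (v : EuclideanSpace ℝ (Fin d)) (c : ℝ) : Convex ℝ (halfSpace v c) :=
  convex_halfSpace_le
    ⟨fun a b => inner_add_right _ _ _, fun r y => by
      rw [smul_eq_mul]; exact real_inner_smul_right v y r⟩ c

lemma miss_measurable (hEc : IsCompact E) (hEconv : Convex ℝ E)
    (x : EuclideanSpace ℝ (Fin d)) (r : ℝ) :
    MeasurableSet[M d E]
      {A : ConvexBodiesIn d E |
        Disjoint (A.1 : Set (EuclideanSpace ℝ (Fin d))) (closedBall x r)} := by
  set B := closedBall x r with hB
  set Q : Set ((Fin d → ℚ) × ℚ) :=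
    {p | Disjoint (halfSpace (ratVec p.1) (p.2 : ℝ)) B ∧
      ((halfSpace (ratVec p.1) (p.2 : ℝ)) ∩ E).Nonempty} with hQ
  have key : {A : ConvexBodiesIn d E | Disjoint (A.1 : Set (EuclideanSpace ℝ (Fin d))) B}
      = ⋃ p ∈ Q, {A : ConvexBodiesIn d E |
          (A.1 : Set (EuclideanSpace ℝ (Fin d))) ⊆ halfSpace (ratVec p.1) (p.2 : ℝ)} := by
    ext A
    simp only [mem_setOf_eq, mem_iUnion, exists_prop]
    constructor
    · intro hdisj
      obtain ⟨f, u, v', h1, huv, h2⟩ :=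
        geometric_hahn_banach_compact_closed A.2.2 A.1.isCompact (convex_closedBall x r)
          isClosed_closedBall hdisj
      set v₀ := (InnerProductSpace.toDual ℝ (EuclideanSpace ℝ (Fin d))).symm f with hv₀
      have hv₀app : ∀ y, ⟪v₀, y⟫ = f y := fun y => InnerProductSpace.toDual_symm_apply
      obtain ⟨R, hR⟩ := (A.1.isCompact.isBounded.union isBounded_closedBall).subset_closedBall 0
      set R₁ := |R| + 1 with hR₁
      have hR₁pos : 0 < R₁ := by positivity
      have hmem : ∀ y, y ∈ (A.1 : Set (EuclideanSpace ℝ (Fin d))) ∪ B → ‖y‖ ≤ R₁ := by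
        intro y hy
        have h := hR hy
        rw [mem_closedBall, dist_zero_right] at h
        calc ‖y‖ ≤ R := h
          _ ≤ |R| := le_abs_self R
          _ ≤ R₁ := by rw [hR₁]; linarith
      set δ := (v' - u) / (4 * R₁) with hδ
      have hδpos : 0 < δ := div_pos (by linarith) (by positivity)
      obtain ⟨w, hw⟩ := exists_rat_vec v₀ hδpos
      have happrox : ∀ y, ‖y‖ ≤ R₁ → |⟪ratVec w, y⟫ - f y| ≤ (v' - u) / 4 := by
        intro y hy
        have heq : ⟪ratVec w, y⟫ - f y = ⟪ratVec w - v₀, y⟫ := by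
          rw [inner_sub_left, hv₀app]
        rw [heq]
        calc |⟪ratVec w - v₀, y⟫| ≤ ‖ratVec w - v₀‖ * ‖y‖ := abs_real_inner_le_norm _ _
          _ ≤ δ * R₁ := by
              apply mul_le_mul _ hy (norm_nonneg _) hδpos.le
              rw [← norm_neg, neg_sub]; exact hw.le
          _ = (v' - u) / 4 := by rw [hδ]; field_simp
      obtain ⟨c, hc1, hc2⟩ := exists_rat_btwn
        (show u + (v' - u) / 4 < v' - (v' - u) / 4 by linarith)
      refine ⟨(w, c), ⟨?_, ?_⟩, ?_⟩
      · rw [Set.disjoint_left]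
        intro y hyH hyB
        have hby : ‖y‖ ≤ R₁ := hmem y (Or.inr hyB)
        have habs := abs_le.1 (happrox y hby)
        have hfy : v' < f y := h2 y hyB
        have hcy : (c : ℝ) < ⟪ratVec w, y⟫ := by linarith [habs.1]
        simp only [halfSpace, mem_setOf_eq] at hyH
        linarith
      · obtain ⟨a, ha⟩ := A.1.nonempty
        refine ⟨a, ?_, A.2.1 ha⟩
        have hba : ‖a‖ ≤ R₁ := hmem a (Or.inl ha)
        have habs := abs_le.1 (happrox a hba)
        have hfa : f a < u := h1 a ha
        simp only [halfSpace, mem_setOf_eq]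
        linarith [habs.2]
      · intro a ha
        have hba : ‖a‖ ≤ R₁ := hmem a (Or.inl ha)
        have habs := abs_le.1 (happrox a hba)
        have hfa : f a < u := h1 a ha
        simp only [halfSpace, mem_setOf_eq]
        linarith [habs.2]
    · rintro ⟨p, hp, hsub⟩
      exact hp.1.mono_left hsub
  rw [key]
  exact MeasurableSet.biUnion (Set.to_countable Q)
    (fun p hp => subset_measurable hEc hEconv (halfSpace_closed _ _) (halfSpace_convex _ _) hp.2)

lemma hit_measurable (hEc : IsCompact E) (hEconv : Convex ℝ E)
    (x : EuclideanSpace ℝ (Fin d)) (r : ℝ) :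
    MeasurableSet[M d E]
      {A : ConvexBodiesIn d E |
        ((A.1 : Set (EuclideanSpace ℝ (Fin d))) ∩ closedBall x r).Nonempty} := by
  have h : {A : ConvexBodiesIn d E |
        ((A.1 : Set (EuclideanSpace ℝ (Fin d))) ∩ closedBall x r).Nonempty}
      = {A : ConvexBodiesIn d E |
          Disjoint (A.1 : Set (EuclideanSpace ℝ (Fin d))) (closedBall x r)}ᶜ := by
    ext A
    simp only [mem_setOf_eq, mem_compl_iff, Set.not_disjoint_iff_nonempty_inter]
  rw [h]
  exact (miss_measurable hEc hEconv x r).compl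

lemma closedBall_measurable (hEc : IsCompact E) (hEconv : Convex ℝ E)
    (K : ConvexBodiesIn d E) (r : ℝ) :
    MeasurableSet[M d E] (closedBall K r) := by
  rcases lt_or_ge r 0 with hr | hr
  · rw [closedBall_eq_empty.2 hr]
    exact @MeasurableSet.empty _ (M d E)
  -- the two half-conditions
  have hedist_ne_top : ∀ A : ConvexBodiesIn d E,
      hausdorffEDist (A.1 : Set (EuclideanSpace ℝ (Fin d))) (K.1 : Set _) ≠ ⊤ :=
    fun A => Metric.hausdorffEdist_ne_top_of_nonempty_of_bounded A.1.nonempty K.1.nonempty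
      A.1.isCompact.isBounded K.1.isCompact.isBounded
  have key : closedBall K r
      = {A : ConvexBodiesIn d E |
          (A.1 : Set (EuclideanSpace ℝ (Fin d))) ⊆ cthickening r (K.1 : Set _)}
        ∩ {A : ConvexBodiesIn d E |
            (K.1 : Set (EuclideanSpace ℝ (Fin d))) ⊆ cthickening r (A.1 : Set _)} := by
    ext A
    have hdist : dist A K = Metric.hausdorffDist (A.1 : Set (EuclideanSpace ℝ (Fin d))) (K.1 : Set _) := by
      rw [Subtype.dist_eq]
      rfl
    simp only [mem_closedBall, mem_inter_iff, mem_setOf_eq, hdist]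
    rw [Metric.hausdorffDist, ← ENNReal.le_ofReal_iff_toReal_le (hedist_ne_top A) hr]
    constructor
    · intro h
      constructor
      · intro y hy
        rw [Metric.mem_cthickening_iff]
        exact le_trans (EMetric.infEdist_le_hausdorffEdist_of_mem hy) h
      · intro y hy
        rw [Metric.mem_cthickening_iff]
        refine le_trans (EMetric.infEdist_le_hausdorffEdist_of_mem hy) ?_
        rw [EMetric.hausdorffEdist_comm]
        exact h
    · rintro ⟨hAK, hKA⟩
      refine EMetric.hausdorffEdist_le_of_infEdist ?_ ?_
      · intro y hy
        exact Metric.mem_cthickening_iff.1 (hAK hy)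
      · intro y hy
        exact Metric.mem_cthickening_iff.1 (hKA hy)
  rw [key]
  refine MeasurableSet.inter ?_ ?_
  · refine subset_measurable hEc hEconv isClosed_cthickening (K.2.2.cthickening r) ?_
    obtain ⟨k, hk⟩ := K.1.nonempty
    exact ⟨k, self_subset_cthickening _ hk, K.2.1 hk⟩
  · obtain ⟨D, hDK, hDc, hKD⟩ := EMetric.subset_countable_closure_of_compact K.1.isCompact
    have h2 : {A : ConvexBodiesIn d E |
          (K.1 : Set (EuclideanSpace ℝ (Fin d))) ⊆ cthickening r (A.1 : Set _)}
        = ⋂ x ∈ D, {A : ConvexBodiesIn d E |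
            ((A.1 : Set (EuclideanSpace ℝ (Fin d))) ∩ closedBall x r).Nonempty} := by
      ext A
      have hthick := A.1.isCompact.cthickening_eq_biUnion_closedBall (δ := r) hr
      simp only [mem_setOf_eq, mem_iInter]
      constructor
      · intro h y hy
        have hyc : y ∈ cthickening r (A.1 : Set (EuclideanSpace ℝ (Fin d))) := h (hDK hy)
        rw [hthick] at hyc
        obtain ⟨a, ha, hya⟩ := Set.mem_iUnion₂.1 hyc
        exact ⟨a, ha, by rwa [mem_closedBall, dist_comm, ← mem_closedBall]⟩
      · intro h
        have hD : D ⊆ cthickening r (A.1 : Set (EuclideanSpace ℝ (Fin d))) := by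
          intro y hy
          obtain ⟨a, haA, haB⟩ := h y hy
          rw [hthick]
          exact Set.mem_iUnion₂.2 ⟨a, haA, by rwa [mem_closedBall, dist_comm, ← mem_closedBall]⟩
        calc (K.1 : Set (EuclideanSpace ℝ (Fin d))) ⊆ closure D := hKD
          _ ⊆ closure (cthickening r (A.1 : Set (EuclideanSpace ℝ (Fin d)))) := closure_mono hD
          _ = cthickening r (A.1 : Set (EuclideanSpace ℝ (Fin d))) :=
              IsClosed.closure_eq isClosed_cthickening
    rw [h2]
    exact MeasurableSet.biInter hDc (fun x _ => hit_measurable hEc hEconv x r)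

lemma bracket_closed (C : ConvexBodiesIn d E) :
    IsClosed {A : ConvexBodiesIn d E |
      (A.1 : Set (EuclideanSpace ℝ (Fin d))) ⊆ (C.1 : Set (EuclideanSpace ℝ (Fin d)))} := by
  rw [← isOpen_compl_iff, Metric.isOpen_iff]
  intro A hA
  simp only [mem_compl_iff, mem_setOf_eq, Set.not_subset] at hA
  obtain ⟨x, hxA, hxC⟩ := hA
  have hpos : 0 < infDist x (C.1 : Set (EuclideanSpace ℝ (Fin d))) :=
    (C.1.isCompact.isClosed.notMem_iff_infDist_pos C.1.nonempty).1 hxC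
  set ε := infDist x (C.1 : Set (EuclideanSpace ℝ (Fin d))) with hε
  refine ⟨ε / 2, by linarith, ?_⟩
  intro A' hA'
  rw [mem_ball] at hA'
  have hdist : Metric.hausdorffDist (A.1 : Set (EuclideanSpace ℝ (Fin d))) (A'.1 : Set _)
      < ε / 2 := by
    rw [Metric.hausdorffDist_comm]
    have : dist A' A = Metric.hausdorffDist (A'.1 : Set (EuclideanSpace ℝ (Fin d)))
        (A.1 : Set _) := by rw [Subtype.dist_eq]; rfl
    rwa [this] at hA'
  have hfin : hausdorffEDist (A.1 : Set (EuclideanSpace ℝ (Fin d)))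
      (A'.1 : Set _) ≠ ⊤ :=
    Metric.hausdorffEdist_ne_top_of_nonempty_of_bounded A.1.nonempty A'.1.nonempty
      A.1.isCompact.isBounded A'.1.isCompact.isBounded
  obtain ⟨y, hyA', hxy⟩ := Metric.exists_dist_lt_of_hausdorffDist_lt hxA hdist hfin
  simp only [mem_compl_iff, mem_setOf_eq, Set.not_subset]
  refine ⟨y, hyA', fun hyC => ?_⟩
  have h1 : ε ≤ dist x y := by
    have h2 := Metric.infDist_le_infDist_add_dist (x := x) (y := y)
      (s := (C.1 : Set (EuclideanSpace ℝ (Fin d))))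
    rw [Metric.infDist_zero_of_mem hyC, zero_add] at h2
    exact h2
  linarith

end BracketsAux

open BracketsAux in
/-- The σ-algebra on the space `𝐂*` of nonempty compact convex subsets of a compact convex
set `E ⊆ ℝ^d` with nonempty interior generated by the brackets `[C] = {A ∈ 𝐂* : A ⊆ C}`
equals the Borel σ-algebra of the Hausdorff metric. -/
theorem brackets_generate_borel {d : ℕ} (hd : 1 ≤ d)
    (E : Set (EuclideanSpace ℝ (Fin d)))
    (hEc : IsCompact E) (hEconv : Convex ℝ E) (hEint : (interior E).Nonempty) :
    MeasurableSpace.generateFrom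
        {B : Set (ConvexBodiesIn d E) | ∃ C : ConvexBodiesIn d E,
          B = {A : ConvexBodiesIn d E |
            (A.1 : Set (EuclideanSpace ℝ (Fin d))) ⊆ (C.1 : Set (EuclideanSpace ℝ (Fin d)))}}
      = borel (ConvexBodiesIn d E) := by
  have hM : MeasurableSpace.generateFrom
        {B : Set (ConvexBodiesIn d E) | ∃ C : ConvexBodiesIn d E,
          B = {A : ConvexBodiesIn d E |
            (A.1 : Set (EuclideanSpace ℝ (Fin d))) ⊆ (C.1 : Set (EuclideanSpace ℝ (Fin d)))}}
      = M d E := rfl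
  rw [hM]
  apply le_antisymm
  · -- M ≤ borel : brackets are closed
    apply MeasurableSpace.generateFrom_le
    rintro B ⟨C, rfl⟩
    have hcl := bracket_closed C
    have h1 : MeasurableSet[borel (ConvexBodiesIn d E)]
        ({A : ConvexBodiesIn d E |
          (A.1 : Set (EuclideanSpace ℝ (Fin d))) ⊆ (C.1 : Set _)}ᶜ) :=
      MeasurableSpace.measurableSet_generateFrom hcl.isOpen_compl
    simpa using h1.compl
  · -- borel ≤ M
    refine MeasurableSpace.generateFrom_le ?_
    intro U hU
    replace hU : IsOpen U := hU
    obtain ⟨D, hDc, hDd⟩ := TopologicalSpace.exists_countable_dense (ConvexBodiesIn d E)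
    have key : U = ⋃ a ∈ D, ⋃ q ∈ {q : ℚ | closedBall a (q : ℝ) ⊆ U}, closedBall a (q : ℝ) := by
      ext A
      simp only [mem_iUnion, exists_prop, mem_setOf_eq]
      constructor
      · intro hA
        obtain ⟨ε, hε, hball⟩ := Metric.isOpen_iff.1 hU A hA
        obtain ⟨a, haD, haA⟩ := hDd.exists_dist_lt A (show 0 < ε / 3 by linarith)
        obtain ⟨q, hq1, hq2⟩ := exists_rat_btwn haA
        refine ⟨a, haD, q, ?_, ?_⟩
        · intro y hy
          rw [mem_closedBall] at hy
          apply hball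
          rw [mem_ball]
          calc dist y A ≤ dist y a + dist a A := dist_triangle y a A
            _ ≤ (q : ℝ) + (q : ℝ) :=
                add_le_add hy (by rw [dist_comm]; exact hq1.le)
            _ < ε := by linarith
        · rw [mem_closedBall]
          exact hq1.le
      · rintro ⟨a, _, q, hqU, hA⟩
        exact hqU hA
    rw [key]
    refine MeasurableSet.biUnion hDc fun a _ => ?_
    exact MeasurableSet.biUnion (Set.to_countable _)
      (fun q _ => closedBall_measurable hEc hEconv a (q : ℝ))
end

section
/- Fix a dimension d ≥ 1 and a compact convex set E ⊆ ℝ^d with nonempty interior, and let 𝐂* be the collection of nonempty compact convex subsets of E with the Hausdorff metric d_H. If μ and ν are two finite Borel measures on (𝐂*, d_H) such that μ([C]) = ν([C]) for every C ∈ 𝐂*, then μ = ν. (This is the measure-uniqueness step establishing that the convex hull is a complete statistic.) -/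
/-- We equip `𝐂*` with its Borel σ-algebra (for the Hausdorff metric topology). -/
noncomputable instance (d : ℕ) (E : Set (EuclideanSpace ℝ (Fin d))) :
    MeasurableSpace (ConvexBodiesIn d E) := borel (ConvexBodiesIn d E)

namespace BracketsAux

open Metric Set MeasureTheory TopologicalSpace MeasurableSpace

variable {d : ℕ} {E : Set (EuclideanSpace ℝ (Fin d))}

local notation "X" => EuclideanSpace ℝ (Fin d)

/-- The bracket `[C]`. -/
def bracket (C : ConvexBodiesIn d E) : Set (ConvexBodiesIn d E) :=
  {A | (A.1 : Set X) ⊆ (C.1 : Set X)}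

/-- The family of all brackets. -/
def brSys (d : ℕ) (E : Set (EuclideanSpace ℝ (Fin d))) : Set (Set (ConvexBodiesIn d E)) :=
  Set.range bracket

/-- Build an element of `ConvexBodiesIn`. -/
noncomputable def mk' (s : Set X) (hc : IsCompact s) (hne : s.Nonempty) (hsub : s ⊆ E)
    (hconv : Convex ℝ s) : ConvexBodiesIn d E :=
  ⟨⟨⟨s, hc⟩, hne⟩, hsub, hconv⟩

lemma dist_eq' (A B : ConvexBodiesIn d E) :
    dist A B = hausdorffDist (A.1 : Set X) (B.1 : Set X) := by
  rw [Subtype.dist_eq, Metric.NonemptyCompacts.dist_eq]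

lemma edist_ne_top (A B : ConvexBodiesIn d E) :
    EMetric.hausdorffEdist (A.1 : Set X) (B.1 : Set X) ≠ ⊤ :=
  hausdorffEdist_ne_top_of_nonempty_of_bounded A.1.nonempty B.1.nonempty
    A.1.isCompact.isBounded B.1.isCompact.isBounded

lemma isClosed_bracket (C : ConvexBodiesIn d E) : IsClosed (bracket C) := by
  refine isClosed_of_closure_subset ?_
  intro A hA a ha
  have hCc : IsClosed (C.1 : Set X) := C.1.isCompact.isClosed
  have h0 : Metric.infDist a (C.1 : Set X) = 0 := by
    refine le_antisymm ?_ Metric.infDist_nonneg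
    refine le_of_forall_pos_le_add fun ε hε => ?_
    obtain ⟨B, hB, hd⟩ := Metric.mem_closure_iff.1 hA ε hε
    have h1 : Metric.infDist a (B.1 : Set X) ≤ hausdorffDist (A.1 : Set X) (B.1 : Set X) :=
      Metric.infDist_le_hausdorffDist_of_mem ha (edist_ne_top A B)
    have h2 : Metric.infDist a (C.1 : Set X) ≤ Metric.infDist a (B.1 : Set X) :=
      Metric.infDist_le_infDist_of_subset hB B.1.nonempty
    rw [dist_eq'] at hd
    linarith
  have : a ∈ closure (C.1 : Set X) :=
    (Metric.mem_closure_iff_infDist_zero C.1.nonempty).2 h0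
  rwa [hCc.closure_eq] at this

lemma isPiSystem_brSys : IsPiSystem (brSys d E) := by
  rintro _ ⟨C, rfl⟩ _ ⟨D, rfl⟩ hne
  obtain ⟨A, hAC, hAD⟩ := hne
  obtain ⟨a, ha⟩ := A.1.nonempty
  have hsub : ((C.1 : Set X) ∩ (D.1 : Set X)) ⊆ E := fun x hx => C.2.1 hx.1
  refine ⟨mk' ((C.1 : Set X) ∩ (D.1 : Set X))
      (C.1.isCompact.inter_right D.1.isCompact.isClosed)
      ⟨a, hAC ha, hAD ha⟩ hsub (C.2.2.inter D.2.2), ?_⟩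
  ext B
  constructor
  · intro hB
    exact ⟨fun y hy => (hB hy).1, fun y hy => (hB hy).2⟩
  · rintro ⟨h1, h2⟩
    exact fun y hy => ⟨h1 hy, h2 hy⟩

/-- Strict separation of a convex body from a disjoint closed bounded convex set,
by a halfspace chosen from any dense family of (functional, level) pairs. -/
lemma separation (T : Set ((X →L[ℝ] ℝ) × ℝ)) (hT : Dense T)
    (A : ConvexBodiesIn d E) (B : Set X) (hBconv : Convex ℝ B) (hBc : IsClosed B)
    (hBb : Bornology.IsBounded B) (hdisj : Disjoint (A.1 : Set X) B) :
    ∃ p ∈ T, ((A.1 : Set X) ⊆ {y | p.1 y ≤ p.2}) ∧ ∀ b ∈ B, p.2 < p.1 b := by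
  obtain ⟨f, u, v, hfu, huv, hfv⟩ :=
    geometric_hahn_banach_compact_closed A.2.2 A.1.isCompact hBconv hBc hdisj
  obtain ⟨R₀, hR₀⟩ := (A.1.isCompact.isBounded.union hBb).exists_norm_le
  set R : ℝ := max R₀ 0 with hR
  have hRnn : 0 ≤ R := le_max_right _ _
  have hbound : ∀ y ∈ (A.1 : Set X) ∪ B, ‖y‖ ≤ R := fun y hy =>
    (hR₀ y hy).trans (le_max_left _ _)
  have hvu : 0 < v - u := by linarith
  set δ : ℝ := (v - u) / (8 * (R + 1)) with hδ
  set η : ℝ := (v - u) / 8 with hη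
  have hδpos : 0 < δ := by positivity
  have hηpos : 0 < η := by positivity
  set m : ℝ := (u + v) / 2 with hm
  obtain ⟨p, hpmem, hpd⟩ : ∃ p ∈ T, dist ((f, m) : (X →L[ℝ] ℝ) × ℝ) p < min δ η := by
    obtain ⟨p, hp1, hp2⟩ := (Metric.dense_iff.1 hT) (f, m) (min δ η) (lt_min hδpos hηpos)
    exact ⟨p, hp2, by simpa [dist_comm] using Metric.mem_ball.1 hp1⟩
  rw [Prod.dist_eq, max_lt_iff] at hpd
  obtain ⟨hd1, hd2⟩ := hpd
  have hnorm : ‖f - p.1‖ < δ := by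
    rw [dist_eq_norm] at hd1; exact lt_of_lt_of_le hd1 (min_le_left _ _)
  have habs : |m - p.2| < η := by
    rw [Real.dist_eq] at hd2; exact lt_of_lt_of_le hd2 (min_le_right _ _)
  have key : ∀ y ∈ (A.1 : Set X) ∪ B, |f y - p.1 y| ≤ δ * R := by
    intro y hy
    have h1 : ‖(f - p.1) y‖ ≤ ‖f - p.1‖ * ‖y‖ := (f - p.1).le_opNorm y
    have h2 : ‖f - p.1‖ * ‖y‖ ≤ δ * R :=
      mul_le_mul hnorm.le (hbound y hy) (norm_nonneg _) hδpos.le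
    simpa [ContinuousLinearMap.sub_apply] using h1.trans h2
  have hδR : δ * R ≤ (v - u) / 8 := by
    rw [hδ, div_mul_eq_mul_div, div_le_div_iff₀ (by positivity) (by norm_num)]
    nlinarith
  have h3 := abs_lt.1 habs
  refine ⟨p, hpmem, ?_, ?_⟩
  · intro a ha
    have h1 := abs_le.1 (key a (Or.inl ha))
    have h2 := hfu a ha
    simp only [Set.mem_setOf_eq]
    rw [hm, hη] at h3
    nlinarith [h1.1, h1.2, h3.1, h3.2]
  · intro b hb
    have h1 := abs_le.1 (key b (Or.inr hb))
    have h2 := hfv b hb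
    rw [hm, hη] at h3
    nlinarith [h1.1, h1.2, h3.1, h3.2]

/-- The set of bodies contained in a halfspace is measurable for the bracket σ-algebra. -/
lemma measurable_subset_halfspace (hEc : IsCompact E) (hEconv : Convex ℝ E)
    (f : X →L[ℝ] ℝ) (c : ℝ) :
    MeasurableSet[generateFrom (brSys d E)]
      {A : ConvexBodiesIn d E | (A.1 : Set X) ⊆ {y | f y ≤ c}} := by
  set H : Set X := {y | f y ≤ c} with hHdef
  have hHclosed : IsClosed H := isClosed_le f.continuous continuous_const
  have hHconv : Convex ℝ H := (convex_Iic c).linear_preimage (f : X →ₗ[ℝ] ℝ)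
  by_cases hne : (H ∩ E).Nonempty
  · have heq : {A : ConvexBodiesIn d E | (A.1 : Set X) ⊆ H} =
        bracket (mk' (H ∩ E) (hEc.inter_left hHclosed) hne Set.inter_subset_right
          (hHconv.inter hEconv)) := by
      ext A
      constructor
      · intro hs y hy
        exact ⟨hs hy, A.2.1 hy⟩
      · intro hs y hy
        exact (hs hy).1
    rw [heq]
    exact measurableSet_generateFrom ⟨_, rfl⟩
  · have heq : {A : ConvexBodiesIn d E | (A.1 : Set X) ⊆ H} = ∅ := by
      ext A
      simp only [Set.mem_setOf_eq, Set.mem_empty_iff_false, iff_false]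
      intro hsub
      obtain ⟨a, ha⟩ := A.1.nonempty
      exact hne ⟨a, hsub ha, A.2.1 ha⟩
    rw [heq]; exact @MeasurableSet.empty _ (MeasurableSpace.generateFrom (brSys d E))

/-- Miss-sets of closed balls are measurable for the bracket σ-algebra. -/
lemma measurable_disjoint_closedBall (hEc : IsCompact E) (hEconv : Convex ℝ E)
    (x : X) (r : ℝ) :
    MeasurableSet[generateFrom (brSys d E)]
      {A : ConvexBodiesIn d E | Disjoint (A.1 : Set X) (closedBall x r)} := by
  obtain ⟨T, hTc, hTd⟩ := TopologicalSpace.exists_countable_dense ((X →L[ℝ] ℝ) × ℝ)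
  haveI := hTc.to_subtype
  have heq : {A : ConvexBodiesIn d E | Disjoint (A.1 : Set X) (closedBall x r)} =
      ⋃ (p : T), {A : ConvexBodiesIn d E |
        ((A.1 : Set X) ⊆ {y | (p : (X →L[ℝ] ℝ) × ℝ).1 y ≤ (p : (X →L[ℝ] ℝ) × ℝ).2}) ∧
        ∀ b ∈ closedBall x r, (p : (X →L[ℝ] ℝ) × ℝ).2 < (p : (X →L[ℝ] ℝ) × ℝ).1 b} := by
    ext A
    simp only [Set.mem_setOf_eq, Set.mem_iUnion]
    constructor
    · intro hdisj
      obtain ⟨p, hpT, h1, h2⟩ := separation T hTd A (closedBall x r)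
        (convex_closedBall x r) Metric.isClosed_closedBall isBounded_closedBall hdisj
      exact ⟨⟨p, hpT⟩, h1, h2⟩
    · rintro ⟨p, h1, h2⟩
      rw [Set.disjoint_left]
      intro a ha hab
      exact absurd (h1 ha) (not_le.2 (h2 a hab))
  rw [heq]
  refine MeasurableSet.iUnion fun p => ?_
  by_cases hc : ∀ b ∈ closedBall x r,
      (p : (X →L[ℝ] ℝ) × ℝ).2 < (p : (X →L[ℝ] ℝ) × ℝ).1 b
  · have : {A : ConvexBodiesIn d E |
        ((A.1 : Set X) ⊆ {y | (p : (X →L[ℝ] ℝ) × ℝ).1 y ≤ (p : (X →L[ℝ] ℝ) × ℝ).2}) ∧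
        ∀ b ∈ closedBall x r, (p : (X →L[ℝ] ℝ) × ℝ).2 < (p : (X →L[ℝ] ℝ) × ℝ).1 b} =
        {A : ConvexBodiesIn d E |
        (A.1 : Set X) ⊆ {y | (p : (X →L[ℝ] ℝ) × ℝ).1 y ≤ (p : (X →L[ℝ] ℝ) × ℝ).2}} := by
      ext A
      simp only [Set.mem_setOf_eq]
      exact and_iff_left hc
    rw [this]
    exact measurable_subset_halfspace hEc hEconv _ _
  · have : {A : ConvexBodiesIn d E |
        ((A.1 : Set X) ⊆ {y | (p : (X →L[ℝ] ℝ) × ℝ).1 y ≤ (p : (X →L[ℝ] ℝ) × ℝ).2}) ∧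
        ∀ b ∈ closedBall x r, (p : (X →L[ℝ] ℝ) × ℝ).2 < (p : (X →L[ℝ] ℝ) × ℝ).1 b} = ∅ := by
      ext A; simp only [Set.mem_setOf_eq, Set.mem_empty_iff_false, iff_false]
      exact fun h => hc h.2
    rw [this]; exact @MeasurableSet.empty _ (MeasurableSpace.generateFrom (brSys d E))

/-- Hit-sets (in `infDist` form) are measurable for the bracket σ-algebra. -/
lemma measurable_infDist_le (hEc : IsCompact E) (hEconv : Convex ℝ E) (x : X) (r : ℝ) :
    MeasurableSet[generateFrom (brSys d E)]
      {A : ConvexBodiesIn d E | Metric.infDist x (A.1 : Set X) ≤ r} := by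
  have heq : {A : ConvexBodiesIn d E | Metric.infDist x (A.1 : Set X) ≤ r} =
      {A : ConvexBodiesIn d E | Disjoint (A.1 : Set X) (closedBall x r)}ᶜ := by
    ext A
    simp only [Set.mem_setOf_eq, Set.mem_compl_iff]
    constructor
    · intro hle hdisj
      obtain ⟨a, ha, hda⟩ := A.1.isCompact.exists_infDist_eq_dist A.1.nonempty x
      have : a ∈ closedBall x r := by
        rw [Metric.mem_closedBall, dist_comm]; rw [hda] at hle; exact hle
      exact Set.disjoint_left.1 hdisj ha this
    · intro hnd
      obtain ⟨a, ha, hb⟩ := Set.not_disjoint_iff.1 hnd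
      calc Metric.infDist x (A.1 : Set X) ≤ dist x a := Metric.infDist_le_dist_of_mem ha
        _ ≤ r := by rw [dist_comm]; exact Metric.mem_closedBall.1 hb
  rw [heq]
  exact (measurable_disjoint_closedBall hEc hEconv x r).compl

/-- Closed balls in the space of convex bodies are measurable for the bracket σ-algebra. -/
lemma measurable_closedBall (hEc : IsCompact E) (hEconv : Convex ℝ E)
    (K : ConvexBodiesIn d E) {ε : ℝ} (hε : 0 ≤ ε) :
    MeasurableSet[generateFrom (brSys d E)] (closedBall K ε) := by
  -- countable dense subset of K
  obtain ⟨D', hD'c, hD'd⟩ := TopologicalSpace.exists_countable_dense (↥(K.1 : Set X))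
  set D : Set X := Subtype.val '' D' with hD
  have hDc : D.Countable := hD'c.image _
  have hDsubK : D ⊆ (K.1 : Set X) := by rintro _ ⟨y, _, rfl⟩; exact y.2
  have hKclos : (K.1 : Set X) ⊆ closure D := by
    intro k hk
    have : (⟨k, hk⟩ : ↥(K.1 : Set X)) ∈ closure D' := hD'd _
    exact closure_subtype.1 this
  have hfin : ∀ A : ConvexBodiesIn d E,
      EMetric.hausdorffEdist (A.1 : Set X) (K.1 : Set X) ≠ ⊤ := fun A => edist_ne_top A K
  have heq : closedBall K ε =
      {A : ConvexBodiesIn d E | (A.1 : Set X) ⊆ Metric.cthickening ε (K.1 : Set X)} ∩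
      ⋂ (k : D), {A : ConvexBodiesIn d E | Metric.infDist (k : X) (A.1 : Set X) ≤ ε} := by
    ext A
    simp only [Metric.mem_closedBall, Set.mem_inter_iff, Set.mem_setOf_eq, Set.mem_iInter]
    rw [dist_eq']
    constructor
    · intro hle
      constructor
      · intro a ha
        have h1 : Metric.infDist a (K.1 : Set X) ≤ ε :=
          (Metric.infDist_le_hausdorffDist_of_mem ha (hfin A)).trans hle
        rw [Metric.mem_cthickening_iff]
        have h2 : Metric.infEDist a (K.1 : Set X) ≠ ⊤ :=
          Metric.infEdist_ne_top K.1.nonempty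
        rw [Metric.infDist] at h1
        rw [← ENNReal.ofReal_toReal h2]
        exact ENNReal.ofReal_le_ofReal h1
      · intro k
        have hkK : (k : X) ∈ (K.1 : Set X) := hDsubK k.2
        have := Metric.infDist_le_hausdorffDist_of_mem hkK
          (by rw [EMetric.hausdorffEdist_comm]; exact hfin A)
        rw [Metric.hausdorffDist_comm] at this
        exact this.trans hle
    · rintro ⟨h1, h2⟩
      refine Metric.hausdorffDist_le_of_infDist hε ?_ ?_
      · intro a ha
        have := h1 ha
        rw [Metric.mem_cthickening_iff] at this
        rw [Metric.infDist]
        calc (Metric.infEDist a (K.1 : Set X)).toReal ≤ (ENNReal.ofReal ε).toReal :=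
              ENNReal.toReal_mono ENNReal.ofReal_ne_top this
          _ = ε := ENNReal.toReal_ofReal hε
      · intro k hk
        have hclosed : IsClosed {y : X | Metric.infDist y (A.1 : Set X) ≤ ε} :=
          isClosed_le (Metric.continuous_infDist_pt _) continuous_const
        have hsub : D ⊆ {y : X | Metric.infDist y (A.1 : Set X) ≤ ε} := by
          rintro y hy; exact h2 ⟨y, hy⟩
        exact closure_minimal hsub hclosed (hKclos hk)
  rw [heq]
  haveI := hDc.to_subtype
  refine MeasurableSet.inter ?_ (MeasurableSet.iInter fun k =>
    measurable_infDist_le hEc hEconv _ _)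
  -- the first set is a bracket
  have hCc : IsCompact (Metric.cthickening ε (K.1 : Set X) ∩ E) :=
    hEc.inter_left Metric.isClosed_cthickening
  have hCne : (Metric.cthickening ε (K.1 : Set X) ∩ E).Nonempty := by
    obtain ⟨k, hk⟩ := K.1.nonempty
    exact ⟨k, Metric.self_subset_cthickening _ hk, K.2.1 hk⟩
  have hCconv : Convex ℝ (Metric.cthickening ε (K.1 : Set X) ∩ E) :=
    (K.2.2.cthickening ε).inter hEconv
  have heq2 : {A : ConvexBodiesIn d E | (A.1 : Set X) ⊆ Metric.cthickening ε (K.1 : Set X)} =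
      bracket (mk' _ hCc hCne Set.inter_subset_right hCconv) := by
    ext A
    constructor
    · intro hs y hy
      exact ⟨hs hy, A.2.1 hy⟩
    · intro hs y hy
      exact (hs hy).1
  rw [heq2]
  exact measurableSet_generateFrom ⟨_, rfl⟩

/-- Every open set of the space of convex bodies is measurable for the bracket σ-algebra. -/
lemma measurable_isOpen (hEc : IsCompact E) (hEconv : Convex ℝ E)
    (U : Set (ConvexBodiesIn d E)) (hU : IsOpen U) :
    MeasurableSet[generateFrom (brSys d E)] U := by
  obtain ⟨D₀, hD₀c, hD₀d⟩ := TopologicalSpace.exists_countable_dense (ConvexBodiesIn d E)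
  haveI := hD₀c.to_subtype
  have heq : U = ⋃ (p : ↥D₀ × ℚ), {A : ConvexBodiesIn d E |
      dist A (p.1 : ConvexBodiesIn d E) ≤ (p.2 : ℝ) ∧ 0 < (p.2 : ℝ) ∧
      closedBall (p.1 : ConvexBodiesIn d E) (p.2 : ℝ) ⊆ U} := by
    ext A
    simp only [Set.mem_iUnion, Set.mem_setOf_eq]
    constructor
    · intro hA
      obtain ⟨r, hr, hball⟩ := Metric.isOpen_iff.1 hU A hA
      obtain ⟨q, hq0, hqr⟩ := exists_rat_btwn (by linarith : (0:ℝ) < r / 2)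
      obtain ⟨x, hx1, hx2⟩ := (Metric.dense_iff.1 hD₀d) A (q : ℝ) (by exact_mod_cast hq0)
      refine ⟨(⟨x, hx2⟩, q), ?_, by exact_mod_cast hq0, ?_⟩
      · rw [dist_comm]
        exact (Metric.mem_ball.1 hx1).le
      · intro B hB
        apply hball
        rw [Metric.mem_ball]
        have h1 : dist B x ≤ (q : ℝ) := Metric.mem_closedBall.1 hB
        have h2 : dist x A < (q : ℝ) := Metric.mem_ball.1 hx1
        calc dist B A ≤ dist B x + dist x A := dist_triangle _ _ _
          _ < (q : ℝ) + (q : ℝ) := by linarith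
          _ < r := by linarith
    · rintro ⟨p, h1, _, h3⟩
      exact h3 (Metric.mem_closedBall.2 h1)
  rw [heq]
  refine MeasurableSet.iUnion fun p => ?_
  by_cases hc : 0 < (p.2 : ℝ) ∧ closedBall (p.1 : ConvexBodiesIn d E) (p.2 : ℝ) ⊆ U
  · have : {A : ConvexBodiesIn d E |
        dist A (p.1 : ConvexBodiesIn d E) ≤ (p.2 : ℝ) ∧ 0 < (p.2 : ℝ) ∧
        closedBall (p.1 : ConvexBodiesIn d E) (p.2 : ℝ) ⊆ U} =
        closedBall (p.1 : ConvexBodiesIn d E) (p.2 : ℝ) := by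
      ext A; simp only [Set.mem_setOf_eq, Metric.mem_closedBall]
      exact ⟨fun h => h.1, fun h => ⟨h, hc.1, hc.2⟩⟩
    rw [this]
    exact measurable_closedBall hEc hEconv _ hc.1.le
  · have : {A : ConvexBodiesIn d E |
        dist A (p.1 : ConvexBodiesIn d E) ≤ (p.2 : ℝ) ∧ 0 < (p.2 : ℝ) ∧
        closedBall (p.1 : ConvexBodiesIn d E) (p.2 : ℝ) ⊆ U} = ∅ := by
      ext A; simp only [Set.mem_setOf_eq, Set.mem_empty_iff_false, iff_false]
      exact fun h => hc ⟨h.2.1, h.2.2⟩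
    rw [this]; exact @MeasurableSet.empty _ (MeasurableSpace.generateFrom (brSys d E))

lemma borel_eq_generateFrom_brSys (hEc : IsCompact E) (hEconv : Convex ℝ E) :
    (borel (ConvexBodiesIn d E) : MeasurableSpace (ConvexBodiesIn d E)) =
      MeasurableSpace.generateFrom (brSys d E) := by
  apply le_antisymm
  · exact MeasurableSpace.generateFrom_le fun U hU => measurable_isOpen hEc hEconv U hU
  · refine MeasurableSpace.generateFrom_le ?_
    rintro _ ⟨C, rfl⟩
    rw [borel_eq_generateFrom_isClosed]
    exact measurableSet_generateFrom (isClosed_bracket C)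

end BracketsAux

/-- Two finite Borel measures on the space `𝐂*` of nonempty compact convex subsets of a
compact convex `E ⊆ ℝ^d` with nonempty interior that agree on all brackets
`[C] = {A ∈ 𝐂* : A ⊆ C}` are equal. -/
theorem measures_eq_of_eq_on_brackets {d : ℕ} (hd : 1 ≤ d)
    (E : Set (EuclideanSpace ℝ (Fin d)))
    (hEc : IsCompact E) (hEconv : Convex ℝ E) (hEint : (interior E).Nonempty)
    (μ ν : MeasureTheory.Measure (ConvexBodiesIn d E))
    [MeasureTheory.IsFiniteMeasure μ] [MeasureTheory.IsFiniteMeasure ν]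
    (h : ∀ C : ConvexBodiesIn d E,
      μ {A : ConvexBodiesIn d E |
          (A.1 : Set (EuclideanSpace ℝ (Fin d))) ⊆ (C.1 : Set (EuclideanSpace ℝ (Fin d)))}
      = ν {A : ConvexBodiesIn d E |
          (A.1 : Set (EuclideanSpace ℝ (Fin d))) ⊆ (C.1 : Set (EuclideanSpace ℝ (Fin d)))}) :
    μ = ν := by
  classical
  have hEne : E.Nonempty := hEint.mono interior_subset
  refine MeasureTheory.ext_of_generate_finite (BracketsAux.brSys d E)
    (BracketsAux.borel_eq_generateFrom_brSys hEc hEconv) BracketsAux.isPiSystem_brSys ?_ ?_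
  · rintro _ ⟨C, rfl⟩
    exact h C
  · have huniv : (Set.univ : Set (ConvexBodiesIn d E)) =
        BracketsAux.bracket (BracketsAux.mk' E hEc hEne subset_rfl hEconv) := by
      ext A
      simp only [Set.mem_univ, true_iff]
      exact A.2.1
    rw [huniv]
    exact h _
end

section
/- Let 0 < a < b. There is no function f : ℕ → ℝ such that for every λ ∈ (a, b) the family (e^{-λ} λ^k / k! · f(k))_{k∈ℕ} is summable with ∑_{k=0}^∞ e^{-λ} λ^k / k! · f(k) = 1/λ. In other words, there exists no unbiased estimator of 1/λ based on a single Poisson(λ) observation, for λ ranging over a nonempty open interval. -/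
open FormalMultilinearSeries Filter Set

/-- There is no unbiased estimator of `1/λ` from a single Poisson(λ) observation, for `λ`
ranging over a nonempty open interval `(a, b)` with `0 < a < b`. -/
theorem no_unbiased_estimator_of_inv_poisson_mean (a b : ℝ) (ha : 0 < a) (hab : a < b) :
    ¬ ∃ f : ℕ → ℝ, ∀ l ∈ Set.Ioo a b,
        Summable (fun k : ℕ => Real.exp (-l) * l ^ k / (Nat.factorial k : ℝ) * f k) ∧
        ∑' k : ℕ, Real.exp (-l) * l ^ k / (Nat.factorial k : ℝ) * f k = 1 / l := by
  rintro ⟨f, hf⟩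
  set c : ℕ → ℝ := fun k => f k / (Nat.factorial k : ℝ) with hc
  -- for every l ∈ (a,b), the power series ∑ c k * l^k sums to exp l / l
  have key : ∀ l ∈ Set.Ioo a b, HasSum (fun k : ℕ => c k * l ^ k) (Real.exp l / l) := by
    intro l hl
    obtain ⟨hs, ht⟩ := hf l hl
    have hrw : (fun k : ℕ => Real.exp (-l) * l ^ k / (Nat.factorial k : ℝ) * f k)
        = fun k : ℕ => Real.exp (-l) * (c k * l ^ k) := by
      funext k; simp only [hc]; ring
    rw [hrw] at hs ht
    have hs' : Summable (fun k : ℕ => c k * l ^ k) :=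
      (summable_mul_left_iff (Real.exp_ne_zero (-l))).mp hs
    have hT : Real.exp (-l) * ∑' k : ℕ, c k * l ^ k = 1 / l := by
      rw [tsum_mul_left] at ht; exact ht
    have hl0 : l ≠ 0 := ne_of_gt (ha.trans hl.1)
    have hTval : ∑' k : ℕ, c k * l ^ k = Real.exp l / l := by
      have hexp : Real.exp (-l) ≠ 0 := Real.exp_ne_zero _
      field_simp [Real.exp_neg] at hT ⊢
      have he : Real.exp (-l) * Real.exp l = 1 := by rw [← Real.exp_add, neg_add_cancel, Real.exp_zero]
      linear_combination Real.exp l * hT - l * (∑' k : ℕ, c k * l ^ k) * he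
    exact hTval ▸ hs'.hasSum
  -- set up radii
  set ρ : ℝ := (a + b) / 2 with hρ
  set l1 : ℝ := (ρ + b) / 2 with hl1
  set z₀ : ℝ := (a + ρ) / 2 with hz₀
  have hρab : ρ ∈ Set.Ioo a b := ⟨by simp [hρ]; linarith, by simp [hρ]; linarith⟩
  have hl1ab : l1 ∈ Set.Ioo a b := ⟨by simp [hl1, hρ]; linarith, by simp [hl1, hρ]; linarith⟩
  have hz₀ab : z₀ ∈ Set.Ioo a ρ := ⟨by simp [hz₀, hρ]; linarith, by simp [hz₀, hρ]; linarith⟩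
  have hρpos : 0 < ρ := ha.trans hρab.1
  have hρl1 : ρ < l1 := by simp [hl1]; linarith [hρab.2]
  -- the radius of the power series is at least ρ
  set p : FormalMultilinearSeries ℝ ℝ ℝ := ofScalars ℝ c with hp
  have hl1rad : (ENNReal.ofReal l1) ≤ p.radius := by
    have hsum := (key l1 hl1ab).summable
    have htend : Tendsto (fun n : ℕ => ‖p n‖ * (l1.toNNReal : ℝ) ^ n) atTop (nhds 0) := by
      have h0 : Tendsto (fun n : ℕ => c n * l1 ^ n) atTop (nhds 0) := hsum.tendsto_atTop_zero
      have h1 : Tendsto (fun n : ℕ => |c n * l1 ^ n|) atTop (nhds 0) := by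
        simpa using h0.abs
      refine h1.congr fun n => ?_
      rw [abs_mul, abs_pow]
      have hn : ‖p n‖ = |c n| := by
        rw [hp, FormalMultilinearSeries.ofScalars_norm, Real.norm_eq_abs]
      rw [hn, Real.coe_toNNReal _ (le_of_lt (ha.trans hl1ab.1)),
        abs_of_nonneg (le_of_lt (ha.trans hl1ab.1))]
    exact p.le_radius_of_tendsto htend
  have hρrad : (ENNReal.ofReal ρ) ≤ p.radius :=
    le_trans (ENNReal.ofReal_le_ofReal hρl1.le) hl1rad
  have hradpos : 0 < p.radius :=
    lt_of_lt_of_le (by simp [ENNReal.ofReal_pos, hρpos]) hρrad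
  -- power series sum is analytic on the ball of radius ρ
  have hball : HasFPowerSeriesOnBall p.sum p 0 (ENNReal.ofReal ρ) :=
    (p.hasFPowerSeriesOnBall hradpos).mono (by simp [ENNReal.ofReal_pos, hρpos]) hρrad
  have hganal : AnalyticOnNhd ℝ p.sum (Metric.ball (0 : ℝ) ρ) := by
    have := hball.analyticOnNhd
    rwa [Metric.emetric_ball] at this
  -- the function h z = z * g z - exp z is analytic on the ball and vanishes on (a, ρ)
  set h : ℝ → ℝ := fun z => z * p.sum z - Real.exp z with hh
  have hanal : AnalyticOnNhd ℝ h (Metric.ball (0 : ℝ) ρ) := by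
    intro x hx
    exact ((analyticAt_id.mul (hganal x hx)).sub analyticAt_rexp)
  have hIoo_sub : Set.Ioo a ρ ⊆ Metric.ball (0 : ℝ) ρ := by
    intro x hx
    rw [Metric.mem_ball, Real.dist_eq, sub_zero, abs_of_pos (ha.trans hx.1)]
    exact hx.2
  have hzero : ∀ z ∈ Set.Ioo a ρ, h z = 0 := by
    intro z hz
    have hzab : z ∈ Set.Ioo a b := ⟨hz.1, hz.2.trans hρab.2⟩
    have hsum : p.sum z = Real.exp z / z := by
      have h1 : p.sum z = ∑' n : ℕ, c n * z ^ n :=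
        tsum_congr fun n => by
          rw [hp, FormalMultilinearSeries.ofScalars_apply_eq, smul_eq_mul]
      rw [h1]; exact (key z hzab).tsum_eq
    have hzne : z ≠ 0 := ne_of_gt (ha.trans hz.1)
    simp [hh, hsum, mul_div_cancel₀ _ hzne]
  have heq : Set.EqOn h 0 (Metric.ball (0 : ℝ) ρ) := by
    apply hanal.eqOn_zero_of_preconnected_of_eventuallyEq_zero
      ((convex_ball (0:ℝ) ρ).isPreconnected) (hIoo_sub hz₀ab)
    filter_upwards [Ioo_mem_nhds hz₀ab.1 hz₀ab.2] with z hz using hzero z hz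
  have h0 : h 0 = 0 := heq (by simp [Metric.mem_ball, hρpos])
  simp [hh, Real.exp_zero] at h0
end

section
/- There exists a constant c ≥ 1 such that for every λ > 0 the variance of 1/(N+1) under the Poisson distribution with parameter λ satisfies Var_λ(1/(N+1)) := ∑_{k=0}^∞ e^{-λ} λ^k / k! · 1/(k+1)² − ( ∑_{k=0}^∞ e^{-λ} λ^k / k! · 1/(k+1) )² ≤ c · min(1, λ^{-3}). -/
open Finset

lemma exp_tsum (l : ℝ) : ∑' k : ℕ, l ^ k / (Nat.factorial k : ℝ) = Real.exp l := by
  rw [Real.exp_eq_exp_ℝ, NormedSpace.exp_eq_tsum_div]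

lemma tsum_shift (l : ℝ) (n : ℕ) :
    ∑' k : ℕ, l ^ (k + n) / (Nat.factorial (k + n) : ℝ)
      = Real.exp l - ∑ i ∈ Finset.range n, l ^ i / (Nat.factorial i : ℝ) := by
  have h := Summable.sum_add_tsum_nat_add (f := fun k : ℕ => l ^ k / (Nat.factorial k : ℝ)) n
    (Real.summable_pow_div_factorial l)
  rw [exp_tsum] at h
  linarith

lemma summable_shift (l : ℝ) (n : ℕ) :
    Summable (fun k : ℕ => l ^ (k + n) / (Nat.factorial (k + n) : ℝ)) :=
  (summable_nat_add_iff n).2 (Real.summable_pow_div_factorial l)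

lemma term1 (l : ℝ) (hl : 0 < l) (k : ℕ) :
    Real.exp (-l) * l ^ k / (Nat.factorial k : ℝ) * (1 / ((k : ℝ) + 1))
      = (Real.exp (-l) / l) * (l ^ (k + 1) / (Nat.factorial (k + 1) : ℝ)) := by
  have hf : ((Nat.factorial (k+1) : ℝ)) = ((k:ℝ)+1) * (Nat.factorial k : ℝ) := by
    push_cast [Nat.factorial_succ]; ring
  have hk : (Nat.factorial k : ℝ) ≠ 0 := Nat.cast_ne_zero.2 k.factorial_ne_zero
  have h1 : ((k:ℝ)+1) ≠ 0 := by positivity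
  rw [hf, pow_succ]
  field_simp

lemma term2 (l : ℝ) (hl : 0 < l) (k : ℕ) :
    Real.exp (-l) * l ^ k / (Nat.factorial k : ℝ) * (1 / (((k : ℝ) + 1) * ((k:ℝ)+2)))
      = (Real.exp (-l) / l^2) * (l ^ (k + 2) / (Nat.factorial (k + 2) : ℝ)) := by
  have hf : ((Nat.factorial (k+2) : ℝ)) = ((k:ℝ)+2) * (((k:ℝ)+1) * (Nat.factorial k : ℝ)) := by
    push_cast [Nat.factorial_succ]; ring
  have hk : (Nat.factorial k : ℝ) ≠ 0 := Nat.cast_ne_zero.2 k.factorial_ne_zero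
  have h1 : ((k:ℝ)+1) ≠ 0 := by positivity
  have h2 : ((k:ℝ)+2) ≠ 0 := by positivity
  rw [hf, pow_add]
  field_simp

lemma term3 (l : ℝ) (hl : 0 < l) (k : ℕ) :
    Real.exp (-l) * l ^ k / (Nat.factorial k : ℝ) * (1 / (((k : ℝ) + 1) * (((k:ℝ)+2) * ((k:ℝ)+3))))
      = (Real.exp (-l) / l^3) * (l ^ (k + 3) / (Nat.factorial (k + 3) : ℝ)) := by
  have hf : ((Nat.factorial (k+3) : ℝ))
      = ((k:ℝ)+3) * (((k:ℝ)+2) * (((k:ℝ)+1) * (Nat.factorial k : ℝ))) := by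
    push_cast [Nat.factorial_succ]; ring
  have hk : (Nat.factorial k : ℝ) ≠ 0 := Nat.cast_ne_zero.2 k.factorial_ne_zero
  have h1 : ((k:ℝ)+1) ≠ 0 := by positivity
  have h2 : ((k:ℝ)+2) ≠ 0 := by positivity
  have h3 : ((k:ℝ)+3) ≠ 0 := by positivity
  rw [hf, pow_add]
  field_simp

/-- There is a constant `c ≥ 1` such that for every `λ > 0`, the variance of `1/(N+1)`
under the Poisson(λ) distribution is at most `c · min(1, λ⁻³)`. -/
theorem poisson_var_inv_succ_bound :
    ∃ c : ℝ, 1 ≤ c ∧ ∀ l : ℝ, 0 < l →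
      (∑' k : ℕ, Real.exp (-l) * l ^ k / (Nat.factorial k : ℝ) * (1 / ((k : ℝ) + 1) ^ 2))
        - (∑' k : ℕ, Real.exp (-l) * l ^ k / (Nat.factorial k : ℝ) * (1 / ((k : ℝ) + 1))) ^ 2
      ≤ c * min 1 (1 / l ^ 3) := by
  refine ⟨3, by norm_num, fun l hl => ?_⟩
  set a := Real.exp (-l) with ha
  set E := Real.exp l with hE
  have apos : 0 < a := Real.exp_pos _
  have Epos : 0 < E := Real.exp_pos _
  have haE : a * E = 1 := by rw [ha, hE, ← Real.exp_add]; simp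
  -- the mean
  have hM : (∑' k : ℕ, Real.exp (-l) * l ^ k / (Nat.factorial k : ℝ) * (1 / ((k : ℝ) + 1)))
      = a / l * (E - 1) := by
    rw [tsum_congr (term1 l hl), tsum_mul_left, tsum_shift l 1]
    simp
    rfl
  -- second "falling" moments
  have hS2 : (∑' k : ℕ, Real.exp (-l) * l ^ k / (Nat.factorial k : ℝ)
        * (1 / (((k : ℝ) + 1) * ((k:ℝ)+2))))
      = a / l^2 * (E - (1 + l)) := by
    rw [tsum_congr (term2 l hl), tsum_mul_left, tsum_shift l 2]
    norm_num [Finset.sum_range_succ]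
    rfl
  have hS3 : (∑' k : ℕ, Real.exp (-l) * l ^ k / (Nat.factorial k : ℝ)
        * (1 / (((k : ℝ) + 1) * (((k:ℝ)+2) * ((k:ℝ)+3)))))
      = a / l^3 * (E - (1 + l + l^2/2)) := by
    rw [tsum_congr (term3 l hl), tsum_mul_left, tsum_shift l 3]
    norm_num [Finset.sum_range_succ]
    rfl
  -- summability
  have sum0 : Summable (fun k : ℕ => a * (l ^ k / (Nat.factorial k : ℝ))) :=
    (Real.summable_pow_div_factorial l).mul_left a
  have sum2 : Summable (fun k : ℕ => Real.exp (-l) * l ^ k / (Nat.factorial k : ℝ)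
      * (1 / (((k : ℝ) + 1) * ((k:ℝ)+2)))) := by
    have := (summable_shift l 2).mul_left (a / l^2)
    exact this.congr fun k => (term2 l hl k).symm
  have sum3 : Summable (fun k : ℕ => Real.exp (-l) * l ^ k / (Nat.factorial k : ℝ)
      * (1 / (((k : ℝ) + 1) * (((k:ℝ)+2) * ((k:ℝ)+3))))) := by
    have := (summable_shift l 3).mul_left (a / l^3)
    exact this.congr fun k => (term3 l hl k).symm
  have fnonneg : ∀ k : ℕ, 0 ≤ Real.exp (-l) * l ^ k / (Nat.factorial k : ℝ) := by
    intro k; positivity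
  have sqle : ∀ k : ℕ, Real.exp (-l) * l ^ k / (Nat.factorial k : ℝ) * (1 / ((k : ℝ) + 1) ^ 2)
      ≤ a * (l ^ k / (Nat.factorial k : ℝ)) := by
    intro k
    have h1 : (0:ℝ) < ((k:ℝ)+1)^2 := by positivity
    have : (1 : ℝ) / ((k:ℝ)+1)^2 ≤ 1 := by
      rw [div_le_one h1]; nlinarith [Nat.cast_nonneg (α := ℝ) k]
    calc Real.exp (-l) * l ^ k / (Nat.factorial k : ℝ) * (1 / ((k : ℝ) + 1) ^ 2)
        ≤ Real.exp (-l) * l ^ k / (Nat.factorial k : ℝ) * 1 :=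
          mul_le_mul_of_nonneg_left this (fnonneg k)
      _ = a * (l ^ k / (Nat.factorial k : ℝ)) := by rw [ha]; ring
  have sumsq : Summable (fun k : ℕ => Real.exp (-l) * l ^ k / (Nat.factorial k : ℝ)
      * (1 / ((k : ℝ) + 1) ^ 2)) := by
    refine Summable.of_nonneg_of_le (fun k => by positivity) sqle sum0
  -- E[f^2] ≤ 1
  have hone : (∑' k : ℕ, Real.exp (-l) * l ^ k / (Nat.factorial k : ℝ)
      * (1 / ((k : ℝ) + 1) ^ 2)) ≤ 1 := by
    calc (∑' k : ℕ, Real.exp (-l) * l ^ k / (Nat.factorial k : ℝ) * (1 / ((k : ℝ) + 1) ^ 2))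
        ≤ ∑' k : ℕ, a * (l ^ k / (Nat.factorial k : ℝ)) := Summable.tsum_le_tsum sqle sumsq sum0
      _ = a * E := by rw [tsum_mul_left, exp_tsum]
      _ = 1 := haE
  -- pointwise bound 1/(k+1)^2 ≤ 1/((k+1)(k+2)) + 3/((k+1)(k+2)(k+3))
  have hptle : ∀ k : ℕ, Real.exp (-l) * l ^ k / (Nat.factorial k : ℝ) * (1 / ((k : ℝ) + 1) ^ 2)
      ≤ Real.exp (-l) * l ^ k / (Nat.factorial k : ℝ) * (1 / (((k : ℝ) + 1) * ((k:ℝ)+2)))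
        + 3 * (Real.exp (-l) * l ^ k / (Nat.factorial k : ℝ)
            * (1 / (((k : ℝ) + 1) * (((k:ℝ)+2) * ((k:ℝ)+3))))) := by
    intro k
    have hx : (0:ℝ) ≤ (k:ℝ) := Nat.cast_nonneg k
    have key : (1:ℝ) / ((k:ℝ)+1)^2
        ≤ 1 / (((k:ℝ)+1) * ((k:ℝ)+2)) + 3 * (1 / (((k:ℝ)+1) * (((k:ℝ)+2) * ((k:ℝ)+3)))) := by
      have e : 1 / (((k:ℝ)+1) * ((k:ℝ)+2)) + 3 * (1 / (((k:ℝ)+1) * (((k:ℝ)+2) * ((k:ℝ)+3))))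
          - 1 / ((k:ℝ)+1)^2
          = 2*(k:ℝ) / (((k:ℝ)+1)^2 * (((k:ℝ)+2) * ((k:ℝ)+3))) := by
        field_simp
        ring
      have epos : (0:ℝ) ≤ 2*(k:ℝ) / (((k:ℝ)+1)^2 * (((k:ℝ)+2) * ((k:ℝ)+3))) := by positivity
      linarith
    have hf := fnonneg k
    calc Real.exp (-l) * l ^ k / (Nat.factorial k : ℝ) * (1 / ((k : ℝ) + 1) ^ 2)
        ≤ Real.exp (-l) * l ^ k / (Nat.factorial k : ℝ)
            * (1 / (((k:ℝ)+1) * ((k:ℝ)+2)) + 3 * (1 / (((k:ℝ)+1) * (((k:ℝ)+2) * ((k:ℝ)+3))))) :=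
          mul_le_mul_of_nonneg_left key hf
      _ = _ := by ring
  -- E[f^2] ≤ S2 + 3 S3
  have hEfsq : (∑' k : ℕ, Real.exp (-l) * l ^ k / (Nat.factorial k : ℝ)
      * (1 / ((k : ℝ) + 1) ^ 2)) ≤ a / l^2 * (E - (1 + l)) + 3 * (a / l^3 * (E - (1 + l + l^2/2))) := by
    calc (∑' k : ℕ, Real.exp (-l) * l ^ k / (Nat.factorial k : ℝ) * (1 / ((k : ℝ) + 1) ^ 2))
        ≤ ∑' k : ℕ, (Real.exp (-l) * l ^ k / (Nat.factorial k : ℝ)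
            * (1 / (((k : ℝ) + 1) * ((k:ℝ)+2)))
          + 3 * (Real.exp (-l) * l ^ k / (Nat.factorial k : ℝ)
            * (1 / (((k : ℝ) + 1) * (((k:ℝ)+2) * ((k:ℝ)+3)))))) :=
          Summable.tsum_le_tsum hptle sumsq (sum2.add (sum3.mul_left 3))
      _ = (∑' k : ℕ, Real.exp (-l) * l ^ k / (Nat.factorial k : ℝ)
            * (1 / (((k : ℝ) + 1) * ((k:ℝ)+2))))
          + 3 * ∑' k : ℕ, Real.exp (-l) * l ^ k / (Nat.factorial k : ℝ)
            * (1 / (((k : ℝ) + 1) * (((k:ℝ)+2) * ((k:ℝ)+3)))) := by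
          rw [Summable.tsum_add sum2 (sum3.mul_left 3), tsum_mul_left]
      _ = _ := by rw [hS2, hS3]
  rw [hM]
  rcases le_total (1:ℝ) (1 / l^3) with hmin | hmin
  · rw [min_eq_left hmin]
    nlinarith [sq_nonneg (a / l * (E - 1)), hone]
  · rw [min_eq_right hmin]
    -- S2 - M^2 ≤ 0 and S3 ≤ 1/l^3
    have hal : 1 - l ≤ a := by
      have := Real.add_one_le_exp (-l); linarith
    have e1 : a * (E - 1) = 1 - a := by rw [mul_sub, haE, mul_one]
    have key2 : a * (E - 1 - l) ≤ (a * (E - 1))^2 := by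
      have h0 : 0 ≤ a * (a - 1 + l) := mul_nonneg apos.le (by linarith)
      have : a * (E - 1 - l) = (1 - a) - a * l := by rw [mul_sub, e1]
      rw [this, e1]
      nlinarith
    have hS2M : a / l^2 * (E - (1 + l)) - (a / l * (E - 1))^2 ≤ 0 := by
      have hl2 : (0:ℝ) < l^2 := by positivity
      have h1 : a / l^2 * (E - (1 + l)) = a * (E - 1 - l) / l^2 := by ring
      have h2 : (a / l * (E - 1))^2 = (a * (E - 1))^2 / l^2 := by ring
      rw [h1, h2, div_sub_div_same]
      exact div_nonpos_of_nonpos_of_nonneg (by linarith) hl2.le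
    have hS3b : a / l^3 * (E - (1 + l + l^2/2)) ≤ 1 / l^3 := by
      have hl3 : (0:ℝ) < l^3 := by positivity
      have hle1 : a * (E - (1 + l + l^2/2)) ≤ 1 := by
        nlinarith [mul_nonneg apos.le (by positivity : (0:ℝ) ≤ 1 + l + l^2/2)]
      calc a / l^3 * (E - (1 + l + l^2/2)) = a * (E - (1 + l + l^2/2)) / l^3 := by ring
        _ ≤ 1 / l^3 := by gcongr
    nlinarith [hEfsq, hS2M, hS3b]
end

section
/- For every β ∈ (0,1) and all constants b₁ ≥ 1, b₂ > 0, there exist constants b₃ > 0 and c > 0 such that for every real n ≥ 1, ∑_{k=0}^∞ e^{-2n} n^k / k! · min( e^n , b₁ · exp( b₂ · n · (k+1)^{-β} ) ) ≤ b₃ · exp( −c · n^{1−β} ). (Exponential-moment Poissonisation bound: combining the trivial bound e^n with a fixed-sample exponential-moment bound of order exp(b₂ n k^{-β}) and averaging over a Poisson(n) number of points yields a stretched-exponentially small quantity; with β = 2/(d+1) this gives the bound e^{-λ|C|} E[exp(λ|C∖Ĉ|)] ≤ b₃ exp(−c (λ|C|)^{(d−1)/(d+1)}).) -/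
lemma tsum_pow_div_factorial_eq_exp (x : ℝ) :
    ∑' k : ℕ, x ^ k / (Nat.factorial k : ℝ) = Real.exp x := by
  rw [Real.exp_eq_exp_ℝ, NormedSpace.exp_eq_tsum_div]

/-- Exponential-moment Poissonisation bound: for `β ∈ (0,1)`, `b₁ ≥ 1`, `b₂ > 0` there are
`b₃, c > 0` such that for all real `n ≥ 1`,
`∑_k e^{-2n} n^k/k! · min(e^n, b₁ e^{b₂ n (k+1)^{-β}}) ≤ b₃ e^{-c n^{1-β}}`. -/
theorem poissonisation_exponential_bound (β b₁ b₂ : ℝ)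
    (hβ0 : 0 < β) (hβ1 : β < 1) (hb₁ : 1 ≤ b₁) (hb₂ : 0 < b₂) :
    ∃ b₃ c : ℝ, 0 < b₃ ∧ 0 < c ∧ ∀ n : ℝ, 1 ≤ n →
      ∑' k : ℕ, Real.exp (-(2 * n)) * n ^ k / (Nat.factorial k : ℝ) *
          min (Real.exp n) (b₁ * Real.exp (b₂ * n * ((k : ℝ) + 1) ^ (-β)))
        ≤ b₃ * Real.exp (-c * n ^ (1 - β)) := by
  have hb₁0 : (0:ℝ) < b₁ := lt_of_lt_of_le one_pos hb₁
  have hlog2 : Real.log 2 < 1 := by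
    have h := Real.log_lt_sub_one_of_pos (by norm_num : (0:ℝ) < 2) (by norm_num)
    linarith
  set c₁ : ℝ := (1 - Real.log 2) / 2 with hc₁def
  have hc₁ : 0 < c₁ := by rw [hc₁def]; linarith
  set K : ℝ := b₂ * (2:ℝ) ^ β with hKdef
  have hK : 0 < K := mul_pos hb₂ (Real.rpow_pos_of_pos two_pos β)
  set K' : ℝ := K + c₁ with hK'def
  have hK' : 0 < K' := add_pos hK hc₁
  set N₀ : ℝ := max 1 ((2 * K') ^ (1/β)) with hN₀def
  have hN₀ : (1:ℝ) ≤ N₀ := le_max_left _ _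
  set M : ℝ := K' * N₀ ^ (1 - β) with hMdef
  have hM : 0 ≤ M := by
    have := Real.rpow_nonneg (le_trans zero_le_one hN₀) (1 - β)
    positivity
  refine ⟨1 + b₁ * Real.exp M, c₁, by positivity, hc₁, ?_⟩
  intro n hn
  have hn0 : (0:ℝ) < n := lt_of_lt_of_le one_pos hn
  have hhalf : (0:ℝ) < n / 2 := by linarith
  set C₁ : ℝ := Real.exp (-(2*n)) * Real.exp n * (2:ℝ) ^ (n/2) with hC₁
  set C₂ : ℝ := Real.exp (-(2*n)) * (b₁ * Real.exp (K * n ^ (1-β))) with hC₂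
  have h2pos : (0:ℝ) < (2:ℝ) ^ (n/2) := Real.rpow_pos_of_pos two_pos _
  have hC₁0 : 0 ≤ C₁ := by positivity
  have hC₂0 : 0 ≤ C₂ := by positivity
  set u : ℕ → ℝ := fun k => C₁ * ((n/2) ^ k / (Nat.factorial k : ℝ)) with hu
  set v : ℕ → ℝ := fun k => C₂ * (n ^ k / (Nat.factorial k : ℝ)) with hv
  set f : ℕ → ℝ := fun k => Real.exp (-(2 * n)) * n ^ k / (Nat.factorial k : ℝ) *
      min (Real.exp n) (b₁ * Real.exp (b₂ * n * ((k : ℝ) + 1) ^ (-β))) with hf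
  have hu0 : ∀ k, 0 ≤ u k := by
    intro k; simp only [hu]; positivity
  have hv0 : ∀ k, 0 ≤ v k := by
    intro k; simp only [hv]; positivity
  have hf0 : ∀ k, 0 ≤ f k := by
    intro k; simp only [hf]
    apply mul_nonneg (by positivity)
    exact le_min (Real.exp_pos _).le (by positivity)
  have hsumu : Summable u := (Real.summable_pow_div_factorial (n/2)).mul_left C₁
  have hsumv : Summable v := (Real.summable_pow_div_factorial n).mul_left C₂
  have hfle : ∀ k, f k ≤ u k + v k := by
    intro k
    have hbase : (0:ℝ) ≤ Real.exp (-(2 * n)) * n ^ k / (Nat.factorial k : ℝ) := by positivity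
    rcases le_or_gt ((k:ℝ)) (n/2) with hk | hk
    · have h1 : f k ≤ Real.exp (-(2*n)) * n ^ k / (Nat.factorial k : ℝ) * Real.exp n := by
        simp only [hf]
        exact mul_le_mul_of_nonneg_left (min_le_left _ _) hbase
      have h2k : (2:ℝ) ^ k ≤ (2:ℝ) ^ (n/2) := by
        rw [← Real.rpow_natCast 2 k]
        exact Real.rpow_le_rpow_of_exponent_le one_le_two hk
      have hnk : n ^ k ≤ (2:ℝ) ^ (n/2) * (n/2) ^ k := by
        have heq : n ^ k = 2 ^ k * (n/2)^k := by
          rw [← mul_pow]; ring_nf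
        rw [heq]
        exact mul_le_mul_of_nonneg_right h2k (by positivity)
      have h2 : Real.exp (-(2*n)) * n ^ k / (Nat.factorial k : ℝ) * Real.exp n ≤ u k := by
        calc Real.exp (-(2*n)) * n ^ k / (Nat.factorial k : ℝ) * Real.exp n
            = Real.exp (-(2*n)) * Real.exp n / (Nat.factorial k : ℝ) * n ^ k := by ring
          _ ≤ Real.exp (-(2*n)) * Real.exp n / (Nat.factorial k : ℝ) *
                ((2:ℝ) ^ (n/2) * (n/2) ^ k) :=
              mul_le_mul_of_nonneg_left hnk (by positivity)
          _ = u k := by simp only [hu, hC₁]; ring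
      have := hv0 k
      linarith [h1.trans h2]
    · have hk1 : n/2 ≤ (k:ℝ) + 1 := by
        have : (0:ℝ) ≤ (k:ℝ) := Nat.cast_nonneg k
        linarith
      have h1 : ((k:ℝ)+1) ^ (-β) ≤ (n/2) ^ (-β) := by
        rw [Real.rpow_neg (by positivity), Real.rpow_neg hhalf.le]
        exact inv_anti₀ (Real.rpow_pos_of_pos hhalf β)
          (Real.rpow_le_rpow hhalf.le hk1 hβ0.le)
      have hhalfpow : (n/2) ^ (-β) = n ^ (-β) * (2:ℝ) ^ β := by
        rw [Real.div_rpow hn0.le (by norm_num : (0:ℝ) ≤ 2), Real.rpow_neg (by norm_num : (0:ℝ) ≤ 2)]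
        field_simp
      have hnn : n * n ^ (-β) = n ^ (1-β) := by
        rw [show (1:ℝ) - β = 1 + (-β) by ring, Real.rpow_add hn0, Real.rpow_one]
      have hexp : b₂ * n * ((k:ℝ)+1) ^ (-β) ≤ K * n ^ (1-β) := by
        calc b₂ * n * ((k:ℝ)+1) ^ (-β) ≤ b₂ * n * (n/2) ^ (-β) :=
              mul_le_mul_of_nonneg_left h1 (by positivity)
          _ = K * n ^ (1-β) := by rw [hhalfpow, hKdef, ← hnn]; ring
      have hmin : min (Real.exp n) (b₁ * Real.exp (b₂ * n * ((k:ℝ)+1) ^ (-β)))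
          ≤ b₁ * Real.exp (K * n ^ (1-β)) := by
        refine (min_le_right _ _).trans ?_
        exact mul_le_mul_of_nonneg_left (Real.exp_le_exp.mpr hexp) hb₁0.le
      have h1' : f k ≤ v k := by
        simp only [hf, hv, hC₂]
        calc Real.exp (-(2 * n)) * n ^ k / (Nat.factorial k : ℝ) *
              min (Real.exp n) (b₁ * Real.exp (b₂ * n * ((k:ℝ)+1) ^ (-β)))
            ≤ Real.exp (-(2 * n)) * n ^ k / (Nat.factorial k : ℝ) *
              (b₁ * Real.exp (K * n ^ (1-β))) := mul_le_mul_of_nonneg_left hmin hbase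
          _ = Real.exp (-(2*n)) * (b₁ * Real.exp (K * n ^ (1-β))) *
              (n ^ k / (Nat.factorial k : ℝ)) := by ring
      have := hu0 k
      linarith
  have hsumf : Summable f := Summable.of_nonneg_of_le hf0 hfle (hsumu.add hsumv)
  have hU : ∑' k, u k = Real.exp (-c₁ * n) := by
    rw [hu, tsum_mul_left, tsum_pow_div_factorial_eq_exp, hC₁,
      Real.rpow_def_of_pos two_pos, ← Real.exp_add, ← Real.exp_add, ← Real.exp_add]
    congr 1
    rw [hc₁def]; ring
  have hV : ∑' k, v k = b₁ * Real.exp (K * n ^ (1-β) - n) := by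
    rw [hv, tsum_mul_left, tsum_pow_div_factorial_eq_exp, hC₂]
    rw [show Real.exp (-(2*n)) * (b₁ * Real.exp (K * n ^ (1-β))) * Real.exp n
        = b₁ * (Real.exp (-(2*n)) * Real.exp (K * n ^ (1-β)) * Real.exp n) by ring,
      ← Real.exp_add, ← Real.exp_add]
    congr 2
    ring
  have hnpow_le : n ^ (1-β) ≤ n := by
    nth_rewrite 2 [← Real.rpow_one n]
    exact Real.rpow_le_rpow_of_exponent_le hn (by linarith)
  have hnpow_pos : 0 < n ^ (1-β) := Real.rpow_pos_of_pos hn0 _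
  have hA : Real.exp (-c₁ * n) ≤ Real.exp (-c₁ * n ^ (1-β)) := by
    apply Real.exp_le_exp.mpr
    nlinarith
  have hB : K * n ^ (1-β) - n ≤ M + -c₁ * n ^ (1-β) := by
    have hgoal : K' * n ^ (1-β) ≤ M + n := by
      rcases le_or_gt n N₀ with h | h
      · have h1 : n ^ (1-β) ≤ N₀ ^ (1-β) := Real.rpow_le_rpow hn0.le h (by linarith)
        have h2 : K' * n ^ (1-β) ≤ M := by
          rw [hMdef]; exact mul_le_mul_of_nonneg_left h1 hK'.le
        linarith
      · have hb : (2*K') ^ (1/β) ≤ n := le_trans (le_max_right _ _) h.le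
        have h2 : 2*K' ≤ n ^ β := by
          calc 2*K' = ((2*K') ^ (1/β)) ^ β := by
                rw [← Real.rpow_mul (by positivity), one_div_mul_cancel hβ0.ne', Real.rpow_one]
            _ ≤ n ^ β := Real.rpow_le_rpow (by positivity) hb hβ0.le
        have hmul : n ^ (1-β) * n ^ β = n := by
          rw [← Real.rpow_add hn0]; norm_num
        have h3 : K' * n ^ (1-β) ≤ n/2 := by
          nlinarith [mul_le_mul_of_nonneg_right h2 hnpow_pos.le]
        have h5 : n/2 ≤ M + n := le_trans (by linarith) (le_add_of_nonneg_left hM)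
        exact h3.trans h5
    rw [hK'def] at hgoal
    linarith
  calc ∑' k, f k ≤ ∑' k, (u k + v k) := Summable.tsum_le_tsum hfle hsumf (hsumu.add hsumv)
    _ = (∑' k, u k) + ∑' k, v k := Summable.tsum_add hsumu hsumv
    _ = Real.exp (-c₁ * n) + b₁ * Real.exp (K * n ^ (1-β) - n) := by rw [hU, hV]
    _ ≤ Real.exp (-c₁ * n ^ (1-β)) + b₁ * (Real.exp M * Real.exp (-c₁ * n ^ (1-β))) := by
        have := Real.exp_le_exp.mpr hB
        rw [Real.exp_add] at this
        have h4 := mul_le_mul_of_nonneg_left this hb₁0.le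
        linarith
    _ = (1 + b₁ * Real.exp M) * Real.exp (-c₁ * n ^ (1-β)) := by ring
end
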